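/- arXiv:2104.07612 — 4 statements merged into one kernel-verified Lean document; each statement's English description precedes it below -/
import Mathlib

section
/- If a 2p×2p complex matrix M satisfies M J M* ≥ J, where J = [[0,I_p],[I_p,0]] = J* = J^{-1}, then also M* J M ≥ J. -/
open Matrix
open scoped ComplexOrder

/-- The matrix `J = [[0, I],[I, 0]]`. -/
def Jm (p : ℕ) : Matrix (Fin p ⊕ Fin p) (Fin p ⊕ Fin p) ℂ :=
  Matrix.fromBlocks 0 1 1 0

variable {n : Type*} [Fintype n] [DecidableEq n]

lemma contraction_flip {S : Matrix n n ℂ} (h : (1 - Sᴴ * S).PosSemidef) :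
    (1 - S * Sᴴ).PosSemidef := by
  classical
  set E : (n → ℂ) → EuclideanSpace ℂ n := fun v => (WithLp.equiv 2 (n → ℂ)).symm v with hE
  have hdot : ∀ u v : n → ℂ, dotProduct (star u) v = (inner ℂ (E u) (E v) : ℂ) := fun u v =>
    (dotProduct_comm _ _).trans rfl
  have hself : ∀ v : n → ℂ, dotProduct (star v) v = (‖E v‖ : ℂ)^2 := by
    intro v; rw [hdot]; exact inner_self_eq_norm_sq_to_K _
  have hnorm : ∀ z : n → ℂ, ‖E (S *ᵥ z)‖ ≤ ‖E z‖ := by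
    intro z
    have h2 := h.dotProduct_mulVec_nonneg z
    rw [sub_mulVec, dotProduct_sub, one_mulVec, sub_nonneg] at h2
    have key : dotProduct (star z) ((Sᴴ * S) *ᵥ z) = dotProduct (star (S *ᵥ z)) (S *ᵥ z) := by
      rw [← mulVec_mulVec, dotProduct_mulVec, star_mulVec]
    rw [key, hself, hself] at h2
    have h3 : (‖E (S *ᵥ z)‖:ℝ)^2 ≤ (‖E z‖:ℝ)^2 := by
      exact_mod_cast Complex.real_le_real.mp (by exact_mod_cast h2)
    nlinarith [norm_nonneg (E (S *ᵥ z)), norm_nonneg (E z)]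
  rw [posSemidef_iff_dotProduct_mulVec]; constructor
  · have : (1 - S * Sᴴ)ᴴ = 1 - S * Sᴴ := by simp
    exact this
  intro x
  set y := Sᴴ *ᵥ x with hy
  have expand : dotProduct (star x) ((1 - S * Sᴴ) *ᵥ x)
      = dotProduct (star x) x - dotProduct (star y) y := by
    rw [sub_mulVec, dotProduct_sub, one_mulVec, hy, ← mulVec_mulVec, dotProduct_mulVec,
      star_mulVec]
    simp
  have hin : (inner ℂ (E y) (E y) : ℂ) = inner ℂ (E x) (E (S *ᵥ y)) := by
    rw [← hdot, ← hdot, hy, star_mulVec, conjTranspose_conjTranspose, ← dotProduct_mulVec]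
  have hyx : ‖E y‖ ≤ ‖E x‖ := by
    rcases eq_or_lt_of_le (norm_nonneg (E y)) with h0 | h0
    · rw [← h0]; exact norm_nonneg _
    have h1 : (‖E y‖:ℝ)^2 ≤ ‖E x‖ * ‖E (S *ᵥ y)‖ := by
      have h2 := norm_inner_le_norm (𝕜 := ℂ) (E x) (E (S *ᵥ y))
      rw [← hin, inner_self_eq_norm_sq_to_K] at h2
      simpa using h2
    have h3 := hnorm y
    nlinarith [norm_nonneg (E x)]
  rw [expand, hself, hself, sub_nonneg]
  exact_mod_cast Complex.real_le_real.mpr (by nlinarith [norm_nonneg (E y), norm_nonneg (E x)])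

lemma core {J T : Matrix n n ℂ} (hJ : Jᴴ = J) (hJ2 : J * J = 1)
    (h : (J - Tᴴ * J * T).PosSemidef) : (J - T * J * Tᴴ).PosSemidef := by
  set P : Matrix n n ℂ := (2⁻¹ : ℂ) • (1 + J) with hP
  set Q : Matrix n n ℂ := (2⁻¹ : ℂ) • (1 - J) with hQ
  have hPh : Pᴴ = P := by
    simp [hP, conjTranspose_smul, hJ, Complex.star_def, Complex.conj_ofReal]
  have hQh : Qᴴ = Q := by
    simp [hQ, conjTranspose_smul, hJ, Complex.star_def, Complex.conj_ofReal]
  have hPQ1 : P + Q = 1 := by rw [hP, hQ]; module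
  have hPmQ : P - Q = J := by rw [hP, hQ]; module
  have hPP : P * P = P := by
    rw [hP, smul_mul_smul_comm]
    have : (1 + J) * (1 + J) = (2:ℂ) • (1 + J) := by
      simp only [mul_add, add_mul, one_mul, mul_one, hJ2]; module
    rw [this]; module
  have hQQ : Q * Q = Q := by
    rw [hQ, smul_mul_smul_comm]
    have : (1 - J) * (1 - J) = (2:ℂ) • (1 - J) := by
      simp only [mul_sub, sub_mul, one_mul, mul_one, hJ2]; module
    rw [this]; module
  have hPQ : P * Q = 0 := by
    rw [hP, hQ, smul_mul_smul_comm]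
    have : (1 + J) * (1 - J) = 0 := by
      simp only [mul_sub, sub_mul, add_mul, mul_add, one_mul, mul_one, hJ2]; abel
    rw [this, smul_zero]
  have hQP : Q * P = 0 := by
    rw [hP, hQ, smul_mul_smul_comm]
    have : (1 - J) * (1 + J) = 0 := by
      simp only [mul_sub, sub_mul, add_mul, mul_add, one_mul, mul_one, hJ2]; abel
    rw [this, smul_zero]
  have hPJ : P * J = P := by
    rw [hP, smul_mul_assoc]
    have : (1 + J) * J = 1 + J := by rw [add_mul, one_mul, hJ2, add_comm]
    rw [this]
  have hJP : J * P = P := by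
    rw [hP, mul_smul_comm]
    have : J * (1 + J) = 1 + J := by rw [mul_add, mul_one, hJ2, add_comm]
    rw [this]
  have hQJ : Q * J = -Q := by
    rw [hQ, smul_mul_assoc]
    have : (1 - J) * J = -(1 - J) := by rw [sub_mul, one_mul, hJ2]; abel
    rw [this, smul_neg]
  have hJQ : J * Q = -Q := by
    rw [hQ, mul_smul_comm]
    have : J * (1 - J) = -(1 - J) := by rw [mul_sub, mul_one, hJ2]; abel
    rw [this, smul_neg]
  clear hP hQ
  -- lifted rules
  have lPP : ∀ X : Matrix n n ℂ, P * (P * X) = P * X := fun X => by rw [← mul_assoc, hPP]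
  have lQQ : ∀ X : Matrix n n ℂ, Q * (Q * X) = Q * X := fun X => by rw [← mul_assoc, hQQ]
  have lPQ : ∀ X : Matrix n n ℂ, P * (Q * X) = 0 := fun X => by rw [← mul_assoc, hPQ, zero_mul]
  have lQP : ∀ X : Matrix n n ℂ, Q * (P * X) = 0 := fun X => by rw [← mul_assoc, hQP, zero_mul]
  have lPJ : ∀ X : Matrix n n ℂ, P * (J * X) = P * X := fun X => by rw [← mul_assoc, hPJ]
  have lJP : ∀ X : Matrix n n ℂ, J * (P * X) = P * X := fun X => by rw [← mul_assoc, hJP]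
  have lQJ : ∀ X : Matrix n n ℂ, Q * (J * X) = -(Q * X) := fun X => by
    rw [← mul_assoc, hQJ, neg_mul]
  have lJQ : ∀ X : Matrix n n ℂ, J * (Q * X) = -(Q * X) := fun X => by
    rw [← mul_assoc, hJQ, neg_mul]
  have lJJ : ∀ X : Matrix n n ℂ, J * (J * X) = X := fun X => by rw [← mul_assoc, hJ2, one_mul]
  -- Step A
  have eqA : Q * Tᴴ * Q * T * Q - Q
      = Qᴴ * (J - Tᴴ * J * T) * Q + (P * T * Q)ᴴ * (P * T * Q) := by
    rw [← hPmQ]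
    simp only [conjTranspose_mul, conjTranspose_sub, conjTranspose_one, hPh, hQh,
      conjTranspose_conjTranspose, mul_add, add_mul, mul_sub, sub_mul, mul_assoc,
      lPP, lQQ, lPQ, lQP, hPP, hQQ, hPQ, hQP, hPJ, hJP, hQJ, hJQ, hJ2, mul_one, one_mul, mul_zero, zero_mul, neg_mul, mul_neg,
      neg_neg, add_zero, zero_add, sub_zero, zero_sub]
    try abel
  have hpsdA : (Q * Tᴴ * Q * T * Q - Q).PosSemidef := by
    rw [eqA]
    exact (h.conjTranspose_mul_mul_same Q).add (posSemidef_conjTranspose_mul_self _)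
  -- Step B : B invertible
  set B : Matrix n n ℂ := P + Q * T * Q with hB
  have eqB : Bᴴ * B = 1 + (Q * Tᴴ * Q * T * Q - Q) := by
    rw [hB, ← hPQ1]
    simp only [conjTranspose_add, conjTranspose_mul, hPh, hQh,
      mul_add, add_mul, mul_assoc, lPP, lQQ, lPQ, lQP, hPP, hQQ, hPQ, hQP, hPJ, hJP, hQJ, hJQ, hJ2, mul_zero, zero_mul, add_zero, zero_add]
    try abel
  have hBBposdef : (Bᴴ * B).PosDef := by
    rw [eqB]; exact Matrix.PosDef.add_posSemidef Matrix.PosDef.one hpsdA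
  have hdetB : B.det ≠ 0 := by
    intro h0
    have : (Bᴴ * B).det = 0 := by rw [det_mul, h0, mul_zero]
    exact hBBposdef.det_pos.ne' this
  have hdetBh : Bᴴ.det ≠ 0 := by
    rw [det_conjTranspose]; exact star_ne_zero.mpr hdetB
  -- Step C : V, W invertible
  set V : Matrix n n ℂ := P + Q * T with hV
  set W : Matrix n n ℂ := P + Q * Tᴴ with hW
  have hPV : P * V = P := by
    rw [hV, mul_add, ← mul_assoc, hPP, hPQ, zero_mul, add_zero]
  have hQV : Q * V = Q * T := by
    rw [hV, mul_add, hQP, ← mul_assoc, hQQ, zero_add]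
  have hPW : P * W = P := by
    rw [hW, mul_add, ← mul_assoc, hPP, hPQ, zero_mul, add_zero]
  have hQW : Q * W = Q * Tᴴ := by
    rw [hW, mul_add, hQP, ← mul_assoc, hQQ, zero_add]
  have hkerP : ∀ (A : Matrix n n ℂ) (v : n → ℂ), A *ᵥ v = 0 → P * A = P → P *ᵥ v = 0 := by
    intro A v hv hPA
    calc P *ᵥ v = (P * A) *ᵥ v := by rw [hPA]
    _ = P *ᵥ (A *ᵥ v) := by rw [mulVec_mulVec]
    _ = 0 := by rw [hv, mulVec_zero]
  have hdetV : V.det ≠ 0 := by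
    intro h0
    obtain ⟨v, hv0, hv⟩ := (Matrix.exists_mulVec_eq_zero_iff).mpr h0
    have hPv : P *ᵥ v = 0 := hkerP V v hv hPV
    have hQTv : (Q * T) *ᵥ v = 0 := by
      rw [← hQV, ← mulVec_mulVec, hv, mulVec_zero]
    have hQv : Q *ᵥ v = v := by
      have : (P + Q) *ᵥ v = v := by rw [hPQ1, one_mulVec]
      rw [add_mulVec, hPv, zero_add] at this
      exact this
    have hBv : B *ᵥ v = 0 := by
      rw [hB, add_mulVec, hPv, zero_add, ← mulVec_mulVec, hQv, hQTv]
    have : v = 0 := by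
      calc v = (B⁻¹ * B) *ᵥ v := by rw [nonsing_inv_mul B (isUnit_iff_ne_zero.mpr hdetB), one_mulVec]
      _ = B⁻¹ *ᵥ (B *ᵥ v) := by rw [mulVec_mulVec]
      _ = 0 := by rw [hBv, mulVec_zero]
    exact hv0 this
  have hdetW : W.det ≠ 0 := by
    intro h0
    obtain ⟨v, hv0, hv⟩ := (Matrix.exists_mulVec_eq_zero_iff).mpr h0
    have hPv : P *ᵥ v = 0 := hkerP W v hv hPW
    have hQTv : (Q * Tᴴ) *ᵥ v = 0 := by
      rw [← hQW, ← mulVec_mulVec, hv, mulVec_zero]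
    have hQv : Q *ᵥ v = v := by
      have : (P + Q) *ᵥ v = v := by rw [hPQ1, one_mulVec]
      rw [add_mulVec, hPv, zero_add] at this
      exact this
    have hBh : Bᴴ = P + Q * Tᴴ * Q := by
      rw [hB, conjTranspose_add, conjTranspose_mul, conjTranspose_mul, hPh, hQh, mul_assoc]
    have hBv : Bᴴ *ᵥ v = 0 := by
      rw [hBh, add_mulVec, hPv, zero_add, ← mulVec_mulVec, hQv, hQTv]
    have : v = 0 := by
      calc v = (Bᴴ⁻¹ * Bᴴ) *ᵥ v := by
            rw [nonsing_inv_mul Bᴴ (isUnit_iff_ne_zero.mpr hdetBh), one_mulVec]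
      _ = Bᴴ⁻¹ *ᵥ (Bᴴ *ᵥ v) := by rw [mulVec_mulVec]
      _ = 0 := by rw [hBv, mulVec_zero]
    exact hv0 this
  have hVinv : V * V⁻¹ = 1 := mul_nonsing_inv V (isUnit_iff_ne_zero.mpr hdetV)
  have hWinv : W⁻¹ * W = 1 := nonsing_inv_mul W (isUnit_iff_ne_zero.mpr hdetW)
  -- Step D : S and the first identity
  set S : Matrix n n ℂ := (P * T + Q) * V⁻¹ with hS
  have hVhV : Vᴴ * V = P + Tᴴ * Q * T := by
    rw [hV]
    simp only [conjTranspose_add, conjTranspose_mul, hPh, hQh,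
      mul_add, add_mul, mul_assoc, lPP, lQQ, lPQ, lQP, hPP, hQQ, hPQ, hQP, hPJ, hJP, hQJ, hJQ, hJ2, mul_zero, zero_mul, add_zero, zero_add]
    try abel
  have hPTQ : (P * T + Q)ᴴ * (P * T + Q) = Tᴴ * P * T + Q := by
    simp only [conjTranspose_add, conjTranspose_mul, hPh, hQh,
      mul_add, add_mul, mul_assoc, lPP, lQQ, lPQ, lQP, hPP, hQQ, hPQ, hQP, hPJ, hJP, hQJ, hJQ, hJ2, mul_zero, zero_mul, add_zero, zero_add]
    try abel
  have hdiff : Vᴴ * V - (P * T + Q)ᴴ * (P * T + Q) = J - Tᴴ * J * T := by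
    rw [hVhV, hPTQ, ← hPmQ]
    simp only [mul_sub, sub_mul, mul_assoc]
    try abel
  have hinvh : (V⁻¹)ᴴ * Vᴴ = 1 := by
    rw [← conjTranspose_mul, hVinv, conjTranspose_one]
  have hSid : 1 - Sᴴ * S = (V⁻¹)ᴴ * (J - Tᴴ * J * T) * V⁻¹ := by
    have e1 : Sᴴ * S = (V⁻¹)ᴴ * ((P * T + Q)ᴴ * (P * T + Q)) * V⁻¹ := by
      rw [hS, conjTranspose_mul]
      noncomm_ring
    have e2 : (1 : Matrix n n ℂ) = (V⁻¹)ᴴ * (Vᴴ * V) * V⁻¹ := by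
      have : (V⁻¹)ᴴ * (Vᴴ * V) * V⁻¹ = ((V⁻¹)ᴴ * Vᴴ) * (V * V⁻¹) := by noncomm_ring
      rw [this, hinvh, hVinv, one_mul]
    rw [e1, ← hdiff, mul_sub, sub_mul]
    nth_rewrite 1 [e2]
    noncomm_ring
  have hSpsd : (1 - Sᴴ * S).PosSemidef := by
    rw [hSid]; exact h.conjTranspose_mul_mul_same _
  have hflip : (1 - S * Sᴴ).PosSemidef := contraction_flip hSpsd
  -- Step F : S' = J Sᴴ J
  set S' : Matrix n n ℂ := J * Sᴴ * J with hS'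
  have hS'psd : (1 - S'ᴴ * S').PosSemidef := by
    have e : 1 - S'ᴴ * S' = Jᴴ * (1 - S * Sᴴ) * J := by
      rw [hS']
      simp only [conjTranspose_mul, conjTranspose_conjTranspose, hJ]
      simp only [mul_sub, sub_mul, mul_one, one_mul, mul_assoc, lJJ, hJ2]
      try rw [← mul_assoc J J, hJ2, one_mul]
    rw [e]; exact hflip.conjTranspose_mul_mul_same _
  -- Step G : S' * W = P * Tᴴ + Q
  have key : (Tᴴ * P + Q) * (J * W) = Vᴴ * (J * (P * Tᴴ + Q)) := by
    rw [hV, hW]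
    simp only [conjTranspose_add, conjTranspose_mul, hPh, hQh,
      mul_add, add_mul, mul_assoc, lPP, lQQ, lPQ, lQP, hPP, hQQ, hPQ, hQP, hPJ, hJP, hQJ, hJQ, hJ2, lPJ, lJP, lQJ, lJQ, lJJ, hPJ, hJP, hQJ, hJQ, hJ2,
      mul_zero, zero_mul, add_zero, zero_add, mul_neg, neg_mul, mul_one, one_mul,
      neg_neg, neg_add, neg_zero]
    have hP1Q : P = 1 - Q := by rw [← hPQ1]; abel
    rw [hP1Q]
    simp only [sub_mul, mul_sub, one_mul, mul_one]
    abel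
  have hS'W : S' * W = P * Tᴴ + Q := by
    have hSh : Sᴴ = (V⁻¹)ᴴ * (Tᴴ * P + Q) := by
      rw [hS, conjTranspose_mul, conjTranspose_add, conjTranspose_mul, hPh, hQh]
    calc S' * W = J * ((V⁻¹)ᴴ * ((Tᴴ * P + Q) * (J * W))) := by
          rw [hS', hSh]; noncomm_ring
    _ = J * ((V⁻¹)ᴴ * (Vᴴ * (J * (P * Tᴴ + Q)))) := by rw [key]
    _ = J * (((V⁻¹)ᴴ * Vᴴ) * (J * (P * Tᴴ + Q))) := by noncomm_ring
    _ = (J * J) * (P * Tᴴ + Q) := by rw [hinvh, one_mul]; noncomm_ring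
    _ = P * Tᴴ + Q := by rw [hJ2, one_mul]
  have hWhW : Wᴴ * W = P + T * Q * Tᴴ := by
    rw [hW]
    simp only [conjTranspose_add, conjTranspose_mul, conjTranspose_conjTranspose, hPh, hQh,
      mul_add, add_mul, mul_assoc, lPP, lQQ, lPQ, lQP, hPP, hQQ, hPQ, hQP, hPJ, hJP, hQJ, hJQ, hJ2, mul_zero, zero_mul, add_zero, zero_add]
    try abel
  have hPTh : (P * Tᴴ + Q)ᴴ * (P * Tᴴ + Q) = T * P * Tᴴ + Q := by
    simp only [conjTranspose_add, conjTranspose_mul, conjTranspose_conjTranspose, hPh, hQh,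
      mul_add, add_mul, mul_assoc, lPP, lQQ, lPQ, lQP, hPP, hQQ, hPQ, hQP, hPJ, hJP, hQJ, hJQ, hJ2, mul_zero, zero_mul, add_zero, zero_add]
    try abel
  have hfinal : J - T * J * Tᴴ = Wᴴ * (1 - S'ᴴ * S') * W := by
    have e1 : ∀ A B : Matrix n n ℂ, Bᴴ * (1 - Aᴴ * A) * B = Bᴴ * B - (A * B)ᴴ * (A * B) := by
      intro A B; rw [conjTranspose_mul]; noncomm_ring
    rw [e1 S' W, hS'W, hWhW, hPTh, ← hPmQ]
    simp only [mul_sub, sub_mul, mul_assoc]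
    abel
  rw [hfinal]
  exact hS'psd.conjTranspose_mul_mul_same _

/-- if `M J M* ≥ J` then `M* J M ≥ J`. -/
theorem MJMstar_ge_J_iff (p : ℕ)
    (M : Matrix (Fin p ⊕ Fin p) (Fin p ⊕ Fin p) ℂ)
    (h : (M * Jm p * Mᴴ - Jm p).PosSemidef) :
    (Mᴴ * Jm p * M - Jm p).PosSemidef := by
  have hJh : (Jm p)ᴴ = Jm p := by
    simp [Jm, fromBlocks_conjTranspose]
  have hJ2 : Jm p * Jm p = 1 := by
    simp [Jm, fromBlocks_multiply, ← fromBlocks_one]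
  have hJh' : (-(Jm p))ᴴ = -(Jm p) := by rw [conjTranspose_neg, hJh]
  have hJ2' : (-(Jm p)) * (-(Jm p)) = 1 := by rw [neg_mul_neg, hJ2]
  have hhyp : ((-(Jm p)) - (Mᴴ)ᴴ * (-(Jm p)) * Mᴴ).PosSemidef := by
    have e : (-(Jm p)) - (Mᴴ)ᴴ * (-(Jm p)) * Mᴴ = M * Jm p * Mᴴ - Jm p := by
      rw [conjTranspose_conjTranspose]; noncomm_ring
    rw [e]; exact h
  have hc := core hJh' hJ2' hhyp
  have e2 : (-(Jm p)) - Mᴴ * (-(Jm p)) * (Mᴴ)ᴴ = Mᴴ * Jm p * M - Jm p := by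
    rw [conjTranspose_conjTranspose]; noncomm_ring
  rw [← e2]; exact hc
end

section
/- Let 𝒫₁(λ), 𝒫₂(λ) be p×p matrices with 𝒫₁*𝒫₁ + 𝒫₂*𝒫₂ > 0 and [𝒫₁* 𝒫₂*] J [𝒫₁; 𝒫₂] ≥ 0, and let M be a 2p×2p matrix with M* J M ≥ J. Then the pair (P̃₁; P̃₂) := M (𝒫₁; 𝒫₂) also satisfies P̃₁*P̃₁ + P̃₂*P̃₂ > 0 and [P̃₁* P̃₂*] J [P̃₁; P̃₂] ≥ 0. -/
open Matrix
open scoped ComplexOrder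

lemma Jm_mul_Jm (p : ℕ) : Jm p * Jm p = 1 := by
  simp [Jm, Matrix.fromBlocks_multiply, ← Matrix.fromBlocks_one]

lemma conjT_fromRows_mul {p : ℕ} (A B : Matrix (Fin p) (Fin p) ℂ) :
    (Matrix.fromRows A B)ᴴ * Matrix.fromRows A B = Aᴴ * A + Bᴴ * B := by
  rw [Matrix.conjTranspose_fromRows_eq_fromCols_conjTranspose,
    Matrix.fromCols_mul_fromRows]

lemma dp_conj {m n : Type*} [Fintype m] [Fintype n] (A : Matrix m n ℂ)
    (B : Matrix m m ℂ) (x : n → ℂ) :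
    star x ⬝ᵥ (Aᴴ * B * A) *ᵥ x = star (A *ᵥ x) ⬝ᵥ B *ᵥ (A *ᵥ x) := by
  simp only [Matrix.star_mulVec, Matrix.dotProduct_mulVec, Matrix.vecMul_vecMul,
    Matrix.mul_assoc]

/-- if the pair `(𝒫₁, 𝒫₂)` is nonsingular with property-`J`
(`𝒫₁*𝒫₁ + 𝒫₂*𝒫₂ > 0` and `[𝒫₁* 𝒫₂*] J [𝒫₁; 𝒫₂] ≥ 0`) and `M* J M ≥ J`, then
the pair `(P̃₁; P̃₂) = M (𝒫₁; 𝒫₂)` (with blocks `P̃₁, P̃₂`) has the same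
properties: `P̃₁*P̃₁ + P̃₂*P̃₂ > 0` and `[P̃₁* P̃₂*] J [P̃₁; P̃₂] ≥ 0`. -/
theorem pair_transformed_keeps_propertyJ (p : ℕ)
    (P₁ P₂ : Matrix (Fin p) (Fin p) ℂ)
    (M : Matrix (Fin p ⊕ Fin p) (Fin p ⊕ Fin p) ℂ)
    (hpos : (P₁ᴴ * P₁ + P₂ᴴ * P₂).PosDef)
    (hJ : ((Matrix.fromRows P₁ P₂)ᴴ * Jm p * Matrix.fromRows P₁ P₂).PosSemidef)
    (hM : (Mᴴ * Jm p * M - Jm p).PosSemidef)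
    (Pt₁ Pt₂ : Matrix (Fin p) (Fin p) ℂ)
    (hPt₁ : Pt₁ = (M * Matrix.fromRows P₁ P₂).submatrix Sum.inl id)
    (hPt₂ : Pt₂ = (M * Matrix.fromRows P₁ P₂).submatrix Sum.inr id) :
    (Pt₁ᴴ * Pt₁ + Pt₂ᴴ * Pt₂).PosDef ∧
    ((Matrix.fromRows Pt₁ Pt₂)ᴴ * Jm p * Matrix.fromRows Pt₁ Pt₂).PosSemidef := by
  set P := Matrix.fromRows P₁ P₂ with hP
  set Q := M * P with hQmul
  have hQ : Matrix.fromRows Pt₁ Pt₂ = Q := by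
    rw [hPt₁, hPt₂]
    exact Matrix.fromRows_toRows Q
  -- key injectivity
  have hinj : ∀ x : Fin p → ℂ, x ≠ 0 → Q *ᵥ x ≠ 0 := by
    intro x hx hQx
    have hv : P *ᵥ x ≠ 0 := by
      intro hv0
      have h := hpos.dotProduct_mulVec_pos hx
      rw [← conjT_fromRows_mul, ← hP, ← Matrix.mulVec_mulVec, hv0, Matrix.mulVec_zero,
        dotProduct_zero] at h
      exact lt_irrefl _ h
    set v := P *ᵥ x with hvdef
    have hMv : M *ᵥ v = 0 := by
      rw [hvdef, Matrix.mulVec_mulVec, ← hQmul, hQx]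
    have h1 : (0 : ℂ) ≤ star v ⬝ᵥ (Jm p) *ᵥ v := by
      have h := hJ.dotProduct_mulVec_nonneg x
      rwa [dp_conj, ← hvdef] at h
    have h2 : star v ⬝ᵥ (Mᴴ * Jm p * M - Jm p) *ᵥ v = -(star v ⬝ᵥ (Jm p) *ᵥ v) := by
      rw [Matrix.sub_mulVec, dotProduct_sub, dp_conj, hMv]
      simp
    have hc0 : star v ⬝ᵥ (Jm p) *ᵥ v = 0 := by
      have h3 := hM.dotProduct_mulVec_nonneg v
      rw [h2] at h3
      exact le_antisymm (neg_nonneg.mp h3) h1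
    have hNv : (Mᴴ * Jm p * M - Jm p) *ᵥ v = 0 := by
      apply (hM.dotProduct_mulVec_zero_iff v).mp
      rw [h2, hc0, neg_zero]
    have hJv : (Jm p) *ᵥ v = 0 := by
      rw [Matrix.sub_mulVec, ← Matrix.mulVec_mulVec, ← Matrix.mulVec_mulVec, hMv,
        Matrix.mulVec_zero, Matrix.mulVec_zero, zero_sub, neg_eq_zero] at hNv
      exact hNv
    have hv0 : v = 0 := by
      have h := congrArg (fun w => (Jm p) *ᵥ w) hJv
      simpa [Matrix.mulVec_mulVec, Jm_mul_Jm] using h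
    exact hv hv0
  constructor
  · have heq : Pt₁ᴴ * Pt₁ + Pt₂ᴴ * Pt₂ = Qᴴ * Q := by
      rw [← conjT_fromRows_mul, hQ]
    rw [heq]
    refine Matrix.PosDef.of_dotProduct_mulVec_pos (Matrix.isHermitian_conjTranspose_mul_self Q) (fun x hx => ?_)
    have hps := Matrix.posSemidef_conjTranspose_mul_self Q
    have hne : star x ⬝ᵥ (Qᴴ * Q) *ᵥ x ≠ 0 := by
      intro h0
      have h2 : star x ⬝ᵥ (Qᴴ * Q) *ᵥ x = star (Q *ᵥ x) ⬝ᵥ (Q *ᵥ x) := by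
        have := dp_conj Q 1 x
        simpa using this
      rw [h2, dotProduct_star_self_eq_zero] at h0
      exact hinj x hx h0
    exact lt_of_le_of_ne (hps.dotProduct_mulVec_nonneg x) (Ne.symm hne)
  · rw [hQ, hQmul, Matrix.conjTranspose_mul]
    have hsplit : Pᴴ * Mᴴ * Jm p * (M * P)
        = Pᴴ * Jm p * P + Pᴴ * (Mᴴ * Jm p * M - Jm p) * P := by
      simp [Matrix.mul_sub, Matrix.sub_mul, Matrix.mul_assoc]
    rw [hsplit]
    exact hJ.add (hM.conjTranspose_mul_mul_same P)
end

section
/- Let {A, S, Π} be a symmetric S-node: A, S bounded operators on a Hilbert space H, S = S* > 0 boundedly invertible, Π : ℂ^{2p} → H bounded, satisfying A S - S A* = i Π J Π* with J = [[0,I_p],[I_p,0]]. Define w_A(λ) = I_{2p} - i J Π* S^{-1} (A - λ I)^{-1} Π for λ in the resolvent set of A. Then for λ, μ in the resolvent set of A, w_A(μ)* J w_A(λ) = J + i(μ̄ - λ) Π* (A* - μ̄ I)^{-1} S^{-1} (A - λ I)^{-1} Π. In particular w_A(λ̄)* J w_A(λ) = J. -/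
set_option maxHeartbeats 1000000
open Matrix ContinuousLinearMap

/-- `J` as an operator on `ℂ^{2p}`. -/
noncomputable def JL (p : ℕ) :
    EuclideanSpace ℂ (Fin p ⊕ Fin p) →L[ℂ] EuclideanSpace ℂ (Fin p ⊕ Fin p) :=
  Matrix.toEuclideanCLM (𝕜 := ℂ) (Jm p)

lemma JL_adjoint (p : ℕ) : adjoint (JL p) = JL p := by
  rw [← star_eq_adjoint, JL, ← map_star]
  congr 1
  simp [Jm, star_eq_conjTranspose, Matrix.fromBlocks_conjTranspose]

lemma JL_comp_JL (p : ℕ) : (JL p).comp (JL p) = 1 := by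
  rw [← mul_def, JL, ← _root_.map_mul]
  rw [show Jm p * Jm p = 1 by simp [Jm, Matrix.fromBlocks_multiply, ← Matrix.fromBlocks_one]]
  simp

/-- for a symmetric S-node `{A,S,Π}` (`AS - SA* = iΠJΠ*`,
`S = S* > 0` boundedly invertible) with resolvents `R z = (A - z)⁻¹` and
`w_A(λ) = I - iJΠ*S⁻¹(A-λ)⁻¹Π`, one has
`w_A(μ)* J w_A(λ) = J + i(μ̄-λ) Π*(A*-μ̄)⁻¹ S⁻¹ (A-λ)⁻¹ Π`; in particular
`w_A(λ̄)* J w_A(λ) = J`. -/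
theorem transfer_function_J_identity (p : ℕ)
    {H : Type*} [NormedAddCommGroup H] [InnerProductSpace ℂ H] [CompleteSpace H]
    (A S Sinv : H →L[ℂ] H)
    (Pi' : EuclideanSpace ℂ (Fin p ⊕ Fin p) →L[ℂ] H)
    (hSsa : adjoint S = S)
    (hSpos : ∃ ε : ℝ, 0 < ε ∧ ∀ f : H, ε * ‖f‖ ^ 2 ≤ (inner ℂ (S f) f : ℂ).re)
    (hSinv1 : S.comp Sinv = 1) (hSinv2 : Sinv.comp S = 1)
    (hid : A.comp S - S.comp (adjoint A) =
      Complex.I • (Pi'.comp ((JL p).comp (adjoint Pi'))))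
    (ρ : Set ℂ) (R : ℂ → (H →L[ℂ] H))
    (hR : ∀ z ∈ ρ, (A - z • (1 : H →L[ℂ] H)).comp (R z) = 1 ∧
      (R z).comp (A - z • (1 : H →L[ℂ] H)) = 1)
    (wA : ℂ → (EuclideanSpace ℂ (Fin p ⊕ Fin p) →L[ℂ] EuclideanSpace ℂ (Fin p ⊕ Fin p)))
    (hwA : ∀ z ∈ ρ, wA z = 1 -
      Complex.I • ((JL p).comp ((adjoint Pi').comp (Sinv.comp ((R z).comp Pi'))))) :
    (∀ lam ∈ ρ, ∀ mu ∈ ρ,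
      (adjoint (wA mu)).comp ((JL p).comp (wA lam)) = JL p +
        (Complex.I * (starRingEnd ℂ mu - lam)) •
          ((adjoint ((R mu).comp Pi')).comp (Sinv.comp ((R lam).comp Pi')))) ∧
    (∀ lam ∈ ρ, starRingEnd ℂ lam ∈ ρ →
      (adjoint (wA (starRingEnd ℂ lam))).comp ((JL p).comp (wA lam)) = JL p) := by
  have hSinvsa : adjoint Sinv = Sinv := by
    have h1 : (adjoint Sinv).comp S = 1 := by
      have h := congrArg adjoint hSinv1
      rwa [adjoint_comp, hSsa, ← star_eq_adjoint (1 : H →L[ℂ] H), star_one] at h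
    calc adjoint Sinv = (adjoint Sinv).comp (S.comp Sinv) := by rw [hSinv1, one_def, comp_id]
      _ = ((adjoint Sinv).comp S).comp Sinv := by rw [comp_assoc]
      _ = Sinv := by rw [h1, one_def, id_comp]
  -- cancellation lemmas in trailing-composition form
  have hJJ' : ∀ Y : EuclideanSpace ℂ (Fin p ⊕ Fin p) →L[ℂ]
      EuclideanSpace ℂ (Fin p ⊕ Fin p), (JL p).comp ((JL p).comp Y) = Y := by
    intro Y; rw [← comp_assoc, JL_comp_JL, one_def, id_comp]
  have hSS1 : ∀ Y : EuclideanSpace ℂ (Fin p ⊕ Fin p) →L[ℂ] H,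
      S.comp (Sinv.comp Y) = Y := by
    intro Y; rw [← comp_assoc, hSinv1, one_def, id_comp]
  have hSS2 : ∀ Y : EuclideanSpace ℂ (Fin p ⊕ Fin p) →L[ℂ] H,
      Sinv.comp (S.comp Y) = Y := by
    intro Y; rw [← comp_assoc, hSinv2, one_def, id_comp]
  -- node identity in trailing-composition form
  have hnode : ∀ Y : EuclideanSpace ℂ (Fin p ⊕ Fin p) →L[ℂ] H,
      Pi'.comp ((JL p).comp ((adjoint Pi').comp Y)) =
        (-Complex.I) • (A.comp (S.comp Y) - S.comp ((adjoint A).comp Y)) := by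
    intro Y
    have h : Pi'.comp ((JL p).comp (adjoint Pi')) =
        (-Complex.I) • (A.comp S - S.comp (adjoint A)) := by
      rw [hid, smul_smul]
      norm_num [Complex.I_mul_I]
    calc Pi'.comp ((JL p).comp ((adjoint Pi').comp Y))
        = (Pi'.comp ((JL p).comp (adjoint Pi'))).comp Y := by
          simp only [comp_assoc]
      _ = (-Complex.I) • (A.comp (S.comp Y) - S.comp ((adjoint A).comp Y)) := by
          rw [h, smul_comp, sub_comp, comp_assoc, comp_assoc]
  have key : ∀ lam ∈ ρ, ∀ mu ∈ ρ,
      (adjoint (wA mu)).comp ((JL p).comp (wA lam)) = JL p +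
        (Complex.I * (starRingEnd ℂ mu - lam)) •
          ((adjoint ((R mu).comp Pi')).comp (Sinv.comp ((R lam).comp Pi'))) := by
    intro lam hlam mu hmu
    have hRl := hR lam hlam
    have hRm := hR mu hmu
    have hAR : ∀ Y : EuclideanSpace ℂ (Fin p ⊕ Fin p) →L[ℂ] H,
        A.comp ((R lam).comp Y) = Y + lam • ((R lam).comp Y) := by
      intro Y
      have h := hRl.1
      rw [sub_comp, smul_comp, one_def, id_comp, sub_eq_iff_eq_add] at h
      rw [← comp_assoc, h]
      simp only [add_comp, smul_comp, id_comp]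
    have hRmA : ∀ Y : EuclideanSpace ℂ (Fin p ⊕ Fin p) →L[ℂ] H,
        (adjoint (R mu)).comp ((adjoint A).comp Y)
          = Y + (starRingEnd ℂ mu) • ((adjoint (R mu)).comp Y) := by
      intro Y
      have h := congrArg adjoint hRm.1
      rw [adjoint_comp, ← star_eq_adjoint (1 : H →L[ℂ] H), star_one] at h
      rw [show adjoint (A - mu • (1 : H →L[ℂ] H)) =
          adjoint A - (starRingEnd ℂ mu) • 1 from by
        simp [← star_eq_adjoint, star_sub, star_smul]] at h
      rw [comp_sub, comp_smul, one_def, comp_id, sub_eq_iff_eq_add] at h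
      rw [← comp_assoc, h]
      simp only [add_comp, smul_comp, id_comp]
    -- adjoint of wA mu
    have hadj : adjoint (wA mu) = 1 + Complex.I •
        ((adjoint Pi').comp ((adjoint (R mu)).comp (Sinv.comp (Pi'.comp (JL p))))) := by
      rw [hwA mu hmu, ← star_eq_adjoint, star_sub, star_one, star_smul,
        star_eq_adjoint ((JL p).comp _), adjoint_comp, adjoint_comp, adjoint_comp,
        adjoint_comp, adjoint_adjoint, JL_adjoint, hSinvsa]
      rw [show star Complex.I = -Complex.I from by simp]
      rw [neg_smul, sub_neg_eq_add]
      congr 2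
    rw [hadj, hwA lam hlam]
    -- expand everything
    simp only [comp_add, add_comp, comp_sub, sub_comp, comp_smul, smul_comp,
      comp_assoc, one_def, id_comp, comp_id, adjoint_comp,
      hJJ', JL_comp_JL, hSS1, hSS2, hnode, hAR, hRmA]
    simp only [comp_sub, comp_add, comp_smul, smul_sub, smul_add, smul_smul,
      comp_assoc, one_def, id_comp, comp_id, hSS1, hSS2, hAR, hRmA]
    have hI2 : Complex.I ^ 2 = -1 := Complex.I_sq
    have hI3 : Complex.I ^ 3 = -Complex.I := by rw [pow_succ, hI2]; ring
    match_scalars <;> ring_nf <;> (try simp only [hI3, hI2]) <;> (try push_cast) <;> (try ring1)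
  refine ⟨key, fun lam hlam hlamc => ?_⟩
  rw [key lam hlam (starRingEnd ℂ lam) hlamc]
  simp
end

section
/- Let S be a strictly positive bounded operator on a Hilbert space H, Φ₂ : ℂ^p → H bounded and injective. If Φ₂* S^{-1} Φ₂ > 0 and the function z ↦ Π* S^{-1} (A - zI)^{-1} Φ₂ g vanishes identically for z outside the spectrum of A (where A is bounded with spectrum {0} and Π = [Φ₁ Φ₂]), then g = 0. (Proof via the Neumann series expansion at z → ∞: the leading coefficient gives Φ₂* S^{-1} Φ₂ g = 0.) -/
open ContinuousLinearMap

set_option maxHeartbeats 1600000 in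
/-- let `S > 0` be bounded, `Φ₂` injective, `A` bounded with
spectrum `{0}`, `Π = [Φ₁ Φ₂]`.  If `Φ₂* S⁻¹ Φ₂ > 0` and
`Π* S⁻¹ (A - zI)⁻¹ Φ₂ g = 0` for all `z ≠ 0`, then `g = 0`. -/
theorem vanishing_resolvent_implies_zero (p : ℕ)
    {H : Type*} [NormedAddCommGroup H] [InnerProductSpace ℂ H] [CompleteSpace H]
    (A S Sinv : H →L[ℂ] H)
    (hspec : spectrum ℂ A = {0})
    (hSsa : adjoint S = S)
    (hSpos : ∃ ε : ℝ, 0 < ε ∧ ∀ f : H, ε * ‖f‖ ^ 2 ≤ (inner ℂ (S f) f : ℂ).re)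
    (hSinv1 : S.comp Sinv = 1) (hSinv2 : Sinv.comp S = 1)
    (Φ₁ Φ₂ : EuclideanSpace ℂ (Fin p) →L[ℂ] H)
    (hΦ₂inj : Function.Injective Φ₂)
    (Pi' : EuclideanSpace ℂ (Fin p ⊕ Fin p) →L[ℂ] H)
    (hPiBlocks : ∀ h : EuclideanSpace ℂ (Fin p ⊕ Fin p),
      Pi' h = Φ₁ (WithLp.toLp 2 (fun i => h (Sum.inl i))) + Φ₂ (WithLp.toLp 2 (fun i => h (Sum.inr i))))
    (hposdef : ∀ g : EuclideanSpace ℂ (Fin p), g ≠ 0 →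
      0 < (inner ℂ ((adjoint Φ₂) (Sinv (Φ₂ g))) g : ℂ).re)
    (R : ℂ → (H →L[ℂ] H))
    (hR : ∀ z : ℂ, z ≠ 0 → (A - z • (1 : H →L[ℂ] H)).comp (R z) = 1 ∧
      (R z).comp (A - z • (1 : H →L[ℂ] H)) = 1)
    (g : EuclideanSpace ℂ (Fin p))
    (hvan : ∀ z : ℂ, z ≠ 0 → (adjoint Pi') (Sinv (R z (Φ₂ g))) = 0) :
    g = 0 := by
  classical
  set x : H := Φ₂ g with hx
  clear_value x
  -- Step 1: from hvan, Φ₂* Sinv (R z x) = 0 for all z ≠ 0.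
  have key : ∀ z : ℂ, z ≠ 0 → (adjoint Φ₂) (Sinv (R z x)) = 0 := by
    intro z hz
    set w : H := Sinv (R z x) with hw
    have hinner : ∀ v : EuclideanSpace ℂ (Fin p), (inner ℂ w (Φ₂ v) : ℂ) = 0 := by
      intro v
      set h : EuclideanSpace ℂ (Fin p ⊕ Fin p) :=
        WithLp.toLp 2 (fun i => Sum.elim (fun _ => (0:ℂ)) (fun j => v j) i) with hh
      have h1 : (WithLp.toLp 2 (fun i => h (Sum.inl i)) : EuclideanSpace ℂ (Fin p)) = 0 := rfl
      have h2 : (WithLp.toLp 2 (fun i => h (Sum.inr i)) : EuclideanSpace ℂ (Fin p)) = v := rfl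
      have hPh : Pi' h = Φ₂ v := by
        rw [hPiBlocks h, h1, h2, map_zero, zero_add]
      calc (inner ℂ w (Φ₂ v) : ℂ) = inner ℂ w (Pi' h) := by rw [hPh]
        _ = inner ℂ ((adjoint Pi') w) h := (adjoint_inner_left Pi' h w).symm
        _ = 0 := by rw [← hw] at *; rw [hvan z hz]; simp
    have : ∀ v : EuclideanSpace ℂ (Fin p), (inner ℂ ((adjoint Φ₂) w) v : ℂ) = 0 := by
      intro v
      rw [adjoint_inner_left]
      exact hinner v
    have := this ((adjoint Φ₂) w)
    exact inner_self_eq_zero.mp this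
  -- Step 2: T (Φ₂ g) = 0 where T = Φ₂* ∘ Sinv, via resolvent estimate for large real z.
  set T : H →L[ℂ] (EuclideanSpace ℂ (Fin p)) := (adjoint Φ₂).comp Sinv with hT
  have hTR : ∀ z : ℂ, z ≠ 0 → T (R z x) = 0 := by
    intro z hz; rw [hT]; simpa [ContinuousLinearMap.comp_apply] using key z hz
  clear_value T
  have hbound : ∀ r : ℝ, ‖A‖ < r → ‖T x‖ ≤ ‖T.comp A‖ * ‖x‖ / (r - ‖A‖) := by
    intro r hr
    have hrpos : (0:ℝ) < r := lt_of_le_of_lt (norm_nonneg A) hr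
    have hz : ((r : ℂ)) ≠ 0 := by exact_mod_cast hrpos.ne'
    obtain ⟨h1, h2⟩ := hR (r : ℂ) hz
    set y : H := R (r:ℂ) x with hy
    have happ : A y - (r : ℂ) • y = x := by
      have := congrArg (fun (f : H →L[ℂ] H) => f x) h1
      simpa [ContinuousLinearMap.comp_apply, ContinuousLinearMap.sub_apply,
        ContinuousLinearMap.smul_apply] using this
    -- norm bound on y = R r x
    have hnorm : (r - ‖A‖) * ‖y‖ ≤ ‖x‖ := by
      have h3 : (r:ℂ) • y = A y - x := by rw [← happ]; abel
      have h4 : r * ‖y‖ = ‖(r:ℂ) • y‖ := by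
        rw [norm_smul]; simp [abs_of_pos hrpos]
      have h5 : ‖A y - x‖ ≤ ‖A‖ * ‖y‖ + ‖x‖ := by
        calc ‖A y - x‖ ≤ ‖A y‖ + ‖x‖ := norm_sub_le _ _
          _ ≤ ‖A‖ * ‖y‖ + ‖x‖ := by gcongr; exact A.le_opNorm _
      have h6 : r * ‖y‖ ≤ ‖A‖ * ‖y‖ + ‖x‖ := by rw [h4, h3]; exact h5
      nlinarith
    have hRle : ‖y‖ ≤ ‖x‖ / (r - ‖A‖) := by
      rw [le_div_iff₀ (by linarith)]
      linarith [hnorm]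
    -- T x = T (A y)
    have hTx : T x = (T.comp A) y := by
      rw [← happ, map_sub, map_smul, hTR (r:ℂ) hz, smul_zero, sub_zero]
      rfl
    calc ‖T x‖ = ‖(T.comp A) y‖ := by rw [hTx]
      _ ≤ ‖T.comp A‖ * ‖y‖ := (T.comp A).le_opNorm _
      _ ≤ ‖T.comp A‖ * (‖x‖ / (r - ‖A‖)) := by
          have := norm_nonneg (T.comp A)
          gcongr
      _ = ‖T.comp A‖ * ‖x‖ / (r - ‖A‖) := by ring
  have hTx0 : T x = 0 := by
    by_contra hne
    have hpos : 0 < ‖T x‖ := norm_pos_iff.mpr hne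
    set C : ℝ := ‖T.comp A‖ * ‖x‖ with hC
    clear_value C
    have hCnn : 0 ≤ C := by rw [hC]; positivity
    set r : ℝ := ‖A‖ + (C + 1) / ‖T x‖ with hr
    clear_value r
    have hrgt : ‖A‖ < r := by
      have h0 : 0 < (C + 1) / ‖T x‖ := div_pos (by linarith) hpos
      rw [hr]; linarith
    have hb := hbound r hrgt
    rw [show r - ‖A‖ = (C + 1) / ‖T x‖ by rw [hr]; ring] at hb
    have hd : (0:ℝ) < (C + 1) / ‖T x‖ := div_pos (by linarith) hpos
    have hb2 : ‖T x‖ * ((C + 1) / ‖T x‖) ≤ C := by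
      rw [← le_div_iff₀ hd]; exact hb
    have heq : ‖T x‖ * ((C + 1) / ‖T x‖) = C + 1 := by
      field_simp
    rw [heq] at hb2; linarith
  -- Step 3: conclude
  by_contra hg
  have hp := hposdef g hg
  have h0 : (adjoint Φ₂) (Sinv (Φ₂ g)) = 0 := by
    have h1 := hTx0
    rw [hT, hx] at h1
    simpa [ContinuousLinearMap.comp_apply] using h1
  rw [h0] at hp
  simp at hp
end
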